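/- The cochain complex (C_*(V), δ) is acyclic: for every k ≥ 1, every h ∈ C_{k+1}(V) with δh = 0 is of the form h = δf for some f ∈ C_k(V). In particular, every h ∈ C_2(V) with δh = 0 (i.e. h_{ts} = h_{tu} + h_{us} for all s,u,t) equals δf for some f ∈ C_1(V), meaning h_{ts} = f_t − f_s. -/
import Mathlib


/-- The coboundary of `k`-increments. For `g : [0,T]^k → V`,
`(δg)_{t₁⋯t_{k+1}} = ∑_{i=1}^{k+1} (−1)^i g_{t₁ ⋯ t̂ᵢ ⋯ t_{k+1}}`. -/
def deltaMap {V : Type*} [AddCommGroup V] (T : ℝ) (k : ℕ)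
    (g : (Fin k → Set.Icc (0 : ℝ) T) → V) :
    (Fin (k + 1) → Set.Icc (0 : ℝ) T) → V :=
  fun t => ∑ i : Fin (k + 1), ((-1 : ℤ) ^ ((i : ℕ) + 1)) • g (t ∘ i.succAbove)

/-- The complex `(C_*(V), δ)` is acyclic: for `k ≥ 1`, every
`h ∈ C_{k+1}(V)` with `δh = 0` is of the form `h = δf` for some `f ∈ C_k(V)`.
Membership in `C_m(V)` means vanishing whenever two consecutive arguments coincide. -/
theorem acyclicity {V : Type*} [AddCommGroup V] (T : ℝ) (hT : 0 ≤ T) (k : ℕ) (hk : 1 ≤ k)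
    (h : (Fin (k + 1) → Set.Icc (0 : ℝ) T) → V)
    (hmem : ∀ t : Fin (k + 1) → Set.Icc (0 : ℝ) T,
      (∃ i j : Fin (k + 1), (i : ℕ) + 1 = (j : ℕ) ∧ t i = t j) → h t = 0)
    (hcocycle : ∀ t : Fin (k + 2) → Set.Icc (0 : ℝ) T, deltaMap T (k + 1) h t = 0) :
    ∃ f : (Fin k → Set.Icc (0 : ℝ) T) → V,
      (∀ t : Fin k → Set.Icc (0 : ℝ) T,
        (∃ i j : Fin k, (i : ℕ) + 1 = (j : ℕ) ∧ t i = t j) → f t = 0)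
      ∧ ∀ t : Fin (k + 1) → Set.Icc (0 : ℝ) T, deltaMap T k f t = h t := by
  have a : Set.Icc (0:ℝ) T := ⟨0, le_refl 0, hT⟩
  refine ⟨fun s => - h (Fin.cons a s), ?_, ?_⟩
  · rintro s ⟨i, j, hij, hsij⟩
    show -h (Fin.cons a s) = 0
    rw [hmem (Fin.cons a s) ⟨i.succ, j.succ, by simpa using hij, by simpa using hsij⟩, neg_zero]
  · intro t
    have key : ∀ i : Fin (k+1), (Fin.cons a t) ∘ (i.succ).succAbove
        = Fin.cons a (t ∘ i.succAbove) := by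
      intro i; funext m
      cases m using Fin.cases with
      | zero => simp [Fin.succ_succAbove_zero]
      | succ m => simp [Fin.succ_succAbove_succ]
    have ht : (Fin.cons a t) ∘ (0 : Fin (k+2)).succAbove = t := by
      funext m; simp [Fin.succAbove_zero]
    have H := hcocycle (Fin.cons a t)
    rw [deltaMap, Fin.sum_univ_succ, ht] at H
    simp only [key, Fin.val_zero, pow_one, neg_smul, one_smul, Fin.val_succ, zero_add] at H
    have H2 : (∑ i : Fin (k+1), ((-1:ℤ) ^ ((i:ℕ) + 1 + 1)) • h (Fin.cons a (t ∘ i.succAbove)))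
        = h t := by
      rw [← sub_eq_zero]
      rw [sub_eq_add_neg, add_comm]
      exact H
    rw [deltaMap, ← H2]
    refine Finset.sum_congr rfl fun i _ => ?_
    simp [pow_succ]
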